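/- arXiv:2305.11005 — 2 statements merged into one kernel-verified Lean document; each statement's English description precedes it below -/
import Mathlib

section
/- If two AMA menus M1 and M2, both indexed by {0,1,...,K}, are 0-reducible, then they are 0-mode-connected; moreover, the continuous path connecting them can be taken piecewise linear with only three linear pieces. -/
open MeasureTheory Finset

namespace AMA

/-- An AMA menu: for each of the `K+1` option indices, an allocation
`x : Fin m → Fin n → ℝ` (buyer `i` receives `x i j` of item `j`) and a boost `β : ℝ`. -/
abbrev Menu (m n K : ℕ) := Fin (K + 1) → (Fin m → Fin n → ℝ) × ℝ

/-- Inner product of a valuation and an allocation. -/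
def dotp {n : ℕ} (v x : Fin n → ℝ) : ℝ := ∑ j, v j * x j

/-- A valid AMA menu: entries in `[0,1]`, each item allocated at most once in total,
default option `(0, 0)`. -/
def IsMenu {m n K : ℕ} (M : Menu m n K) : Prop :=
  (∀ k i j, 0 ≤ (M k).1 i j ∧ (M k).1 i j ≤ 1) ∧
  (∀ k j, ∑ i, (M k).1 i j ≤ 1) ∧ M 0 = 0

/-- The set of valuation profiles: each buyer's valuation lies in `[0,1]^n` with
coordinate sum at most `1`. -/
def VP (m n : ℕ) : Set (Fin m → Fin n → ℝ) :=
  {v | ∀ i, (∀ j, 0 ≤ v i j ∧ v i j ≤ 1) ∧ ∑ j, v i j ≤ 1}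

/-- Boosted welfare of option `k` at the valuation profile `v`. -/
def bw {m n K : ℕ} (M : Menu m n K) (v : Fin m → Fin n → ℝ) (k : Fin (K + 1)) : ℝ :=
  (∑ i, dotp (v i) ((M k).1 i)) + (M k).2

/-- Boosted welfare of option `k` at `v` when buyer `i` is omitted. -/
def bwWo {m n K : ℕ} (M : Menu m n K) (v : Fin m → Fin n → ℝ) (i : Fin m)
    (k : Fin (K + 1)) : ℝ :=
  (∑ l ∈ Finset.univ.erase i, dotp (v l) ((M k).1 l)) + (M k).2

/-- Maximal boosted welfare `W(v)`. -/
noncomputable def W {m n K : ℕ} (M : Menu m n K) (v : Fin m → Fin n → ℝ) : ℝ :=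
  Finset.univ.sup' Finset.univ_nonempty (bw M v)

/-- Maximal boosted welfare `W(v₋ᵢ)` with buyer `i` omitted. -/
noncomputable def WWo {m n K : ℕ} (M : Menu m n K) (v : Fin m → Fin n → ℝ)
    (i : Fin m) : ℝ :=
  Finset.univ.sup' Finset.univ_nonempty (bwWo M v i)

/-- The minimal boost among boosted-welfare-maximizing options (tie-breaking in favor
of maximal total payment). -/
noncomputable def minBeta {m n K : ℕ} (M : Menu m n K) (v : Fin m → Fin n → ℝ) : ℝ :=
  sInf {b : ℝ | ∃ k, bw M v k = W M v ∧ b = (M k).2}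

/-- Total payment collected at `v`:
`∑ i W(v₋ᵢ) − (m−1) W(v) − min {β k : W_k(v) = W(v)}`. -/
noncomputable def pay {m n K : ℕ} (M : Menu m n K) (v : Fin m → Fin n → ℝ) : ℝ :=
  (∑ i, WWo M v i) - ((m : ℝ) - 1) * W M v - minBeta M v

/-- Expected revenue of the AMA menu `M` under the profile distribution `F`. -/
noncomputable def Rev {m n K : ℕ} (F : Measure (Fin m → Fin n → ℝ))
    (M : Menu m n K) : ℝ :=
  ∫ v, pay M v ∂F

/-- Option-wise convex combination of two AMA menus. -/
noncomputable def comb {m n K : ℕ} (lam : ℝ) (M M' : Menu m n K) : Menu m n K :=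
  fun k => (fun i j => lam * (M k).1 i j + (1 - lam) * (M' k).1 i j,
            lam * (M k).2 + (1 - lam) * (M' k).2)

/-- The event that the option subset `K'` suffices at `v`: some boosted-welfare
maximizer with minimal boost lies in `K'`, and for every buyer `i` some maximizer of the
boosted welfare of `v₋ᵢ` lies in `K'`. -/
def GoodEvent {m n K : ℕ} (M : Menu m n K) (K' : Finset (Fin (K + 1)))
    (v : Fin m → Fin n → ℝ) : Prop :=
  (∃ k ∈ K', bw M v k = W M v ∧ (M k).2 = minBeta M v) ∧
  ∀ i : Fin m, ∃ k ∈ K', bwWo M v i k = WWo M v i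

/-- `M` is `ε`-reducible: some subset `K'` of options containing the default option, of
cardinality at most `√(K+1)`, whose good event has probability at least `1 - ε/m`. -/
def Reducible {m n K : ℕ} (F : Measure (Fin m → Fin n → ℝ)) (M : Menu m n K)
    (ε : ℝ) : Prop :=
  ∃ K' : Finset (Fin (K + 1)), 0 ∈ K' ∧ (K'.card : ℝ) ≤ Real.sqrt (K + 1) ∧
    (F {v | GoodEvent M K' v}).toReal ≥ 1 - ε / (m : ℝ)

/-- `M₁` and `M₂` are `ε`-mode-connected by a piecewise linear path with `pieces`
linear pieces, all whose menus are valid AMA menus and have revenue at least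
`min (Rev M₁) (Rev M₂) - ε`. -/
def PLConnected {m n K : ℕ} (F : Measure (Fin m → Fin n → ℝ)) (M₁ M₂ : Menu m n K)
    (ε : ℝ) (pieces : ℕ) : Prop :=
  ∃ P : Fin (pieces + 1) → Menu m n K, P 0 = M₁ ∧ P (Fin.last pieces) = M₂ ∧
    (∀ i, IsMenu (P i)) ∧
    ∀ i : Fin pieces, ∀ lam ∈ Set.Icc (0 : ℝ) 1,
      Rev F (comb lam (P i.castSucc) (P i.succ)) ≥ min (Rev F M₁) (Rev F M₂) - ε


/-! ### Auxiliary lemmas -/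

section Aux

variable {m n K : ℕ}

lemma bw_le_W (M : Menu m n K) (v : Fin m → Fin n → ℝ) (k : Fin (K + 1)) :
    bw M v k ≤ W M v :=
  Finset.le_sup' _ (Finset.mem_univ k)

lemma bwWo_le_WWo (M : Menu m n K) (v : Fin m → Fin n → ℝ) (i : Fin m) (k : Fin (K + 1)) :
    bwWo M v i k ≤ WWo M v i :=
  Finset.le_sup' _ (Finset.mem_univ k)

lemma exists_W (M : Menu m n K) (v : Fin m → Fin n → ℝ) :
    ∃ k, bw M v k = W M v := by
  obtain ⟨k, -, hk⟩ := Finset.exists_mem_eq_sup' (Finset.univ_nonempty) (bw M v)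
  exact ⟨k, hk.symm⟩

lemma betaSet_eq (M : Menu m n K) (v : Fin m → Fin n → ℝ) :
    {b : ℝ | ∃ k, bw M v k = W M v ∧ b = (M k).2} =
      ↑((Finset.univ.filter (fun k => bw M v k = W M v)).image (fun k => (M k).2)) := by
  ext b
  simp only [Finset.coe_image, Finset.coe_filter, Set.mem_image, Set.mem_setOf_eq,
    Finset.mem_univ, true_and]
  exact ⟨fun ⟨k, h, hb⟩ => ⟨k, h, hb.symm⟩, fun ⟨k, h, hb⟩ => ⟨k, h, hb.symm⟩⟩

lemma betaSet_finite (M : Menu m n K) (v : Fin m → Fin n → ℝ) :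
    Set.Finite {b : ℝ | ∃ k, bw M v k = W M v ∧ b = (M k).2} := by
  rw [betaSet_eq]; exact Finset.finite_toSet _

lemma betaSet_nonempty (M : Menu m n K) (v : Fin m → Fin n → ℝ) :
    Set.Nonempty {b : ℝ | ∃ k, bw M v k = W M v ∧ b = (M k).2} := by
  obtain ⟨k, hk⟩ := exists_W M v
  exact ⟨(M k).2, k, hk, rfl⟩

lemma minBeta_le {M : Menu m n K} {v : Fin m → Fin n → ℝ} {k : Fin (K + 1)}
    (h : bw M v k = W M v) : minBeta M v ≤ (M k).2 :=
  csInf_le (betaSet_finite M v).bddBelow ⟨k, h, rfl⟩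

lemma exists_minBeta (M : Menu m n K) (v : Fin m → Fin n → ℝ) :
    ∃ k, bw M v k = W M v ∧ minBeta M v = (M k).2 :=
  Set.Nonempty.csInf_mem (betaSet_nonempty M v) (betaSet_finite M v)

lemma minBeta_le_iff {M : Menu m n K} {v : Fin m → Fin n → ℝ} {r : ℝ} :
    minBeta M v ≤ r ↔ ∃ k, bw M v k = W M v ∧ (M k).2 ≤ r := by
  constructor
  · intro h
    obtain ⟨k, hk, he⟩ := exists_minBeta M v
    exact ⟨k, hk, he ▸ h⟩
  · rintro ⟨k, hk, hr⟩
    exact (minBeta_le hk).trans hr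

lemma measurable_bw (M : Menu m n K) (k : Fin (K + 1)) :
    Measurable fun v : Fin m → Fin n → ℝ => bw M v k := by
  unfold bw dotp
  exact (Finset.measurable_sum _ fun i _ => Finset.measurable_sum _ fun j _ =>
    ((measurable_pi_apply j).comp (measurable_pi_apply i)).mul_const _).add_const _

lemma measurable_bwWo (M : Menu m n K) (i : Fin m) (k : Fin (K + 1)) :
    Measurable fun v : Fin m → Fin n → ℝ => bwWo M v i k := by
  unfold bwWo dotp
  exact (Finset.measurable_sum _ fun l _ => Finset.measurable_sum _ fun j _ =>
    ((measurable_pi_apply j).comp (measurable_pi_apply l)).mul_const _).add_const _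

lemma measurable_W (M : Menu m n K) : Measurable (W M) := by
  apply measurable_of_Iic
  intro r
  have h : W M ⁻¹' Set.Iic r = ⋂ k, {v | bw M v k ≤ r} := by
    ext v
    simp [W, Finset.sup'_le_iff]
  rw [h]
  exact MeasurableSet.iInter fun k => measurableSet_le (measurable_bw M k) measurable_const

lemma measurable_WWo (M : Menu m n K) (i : Fin m) : Measurable fun v => WWo M v i := by
  apply measurable_of_Iic
  intro r
  have h : (fun v => WWo M v i) ⁻¹' Set.Iic r = ⋂ k, {v | bwWo M v i k ≤ r} := by
    ext v
    simp [WWo, Finset.sup'_le_iff]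
  rw [h]
  exact MeasurableSet.iInter fun k => measurableSet_le (measurable_bwWo M i k) measurable_const

lemma measurable_minBeta (M : Menu m n K) : Measurable fun v => minBeta M v := by
  apply measurable_of_Iic
  intro r
  have h : (fun v => minBeta M v) ⁻¹' Set.Iic r
      = ⋃ k, ({v | bw M v k = W M v} ∩ {v | (M k).2 ≤ r}) := by
    ext v
    simp only [Set.mem_preimage, Set.mem_Iic, minBeta_le_iff, Set.mem_iUnion,
      Set.mem_inter_iff, Set.mem_setOf_eq]
  rw [h]
  refine MeasurableSet.iUnion fun k => MeasurableSet.inter ?_ ?_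
  · exact measurableSet_eq_fun (measurable_bw M k)
      (measurable_W M)
  · exact MeasurableSet.const _

lemma measurable_pay (M : Menu m n K) : Measurable (pay M) := by
  unfold pay
  exact ((Finset.measurable_sum _ fun i _ => measurable_WWo M i).sub
    ((measurable_W M).const_mul _)).sub (measurable_minBeta M)

end Aux


section Aux2

variable {m n K : ℕ}

lemma measurableSet_goodEvent (M : Menu m n K) (K' : Finset (Fin (K + 1))) :
    MeasurableSet {v : Fin m → Fin n → ℝ | GoodEvent M K' v} := by
  have h : {v : Fin m → Fin n → ℝ | GoodEvent M K' v} =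
      (⋃ k ∈ (K' : Set (Fin (K + 1))),
        ({v | bw M v k = W M v} ∩ {v | (M k).2 = minBeta M v})) ∩
      ⋂ i, ⋃ k ∈ (K' : Set (Fin (K + 1))), {v | bwWo M v i k = WWo M v i} := by
    ext v
    simp only [GoodEvent, Set.mem_setOf_eq, Set.mem_inter_iff, Set.mem_iUnion,
      Set.mem_iInter, Finset.mem_coe, exists_prop]
  rw [h]
  refine MeasurableSet.inter ?_ (MeasurableSet.iInter fun i => ?_)
  · refine MeasurableSet.biUnion K'.countable_toSet fun k _ => MeasurableSet.inter ?_ ?_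
    · exact measurableSet_eq_fun (measurable_bw M k) (measurable_W M)
    · exact measurableSet_eq_fun measurable_const (measurable_minBeta M)
  · exact MeasurableSet.biUnion K'.countable_toSet fun k _ =>
      measurableSet_eq_fun (measurable_bwWo M i k) (measurable_WWo M i)

lemma measurableSet_VP : MeasurableSet (VP m n) := by
  have h : VP m n = ⋂ i, ((⋂ j, ({v : Fin m → Fin n → ℝ | 0 ≤ v i j} ∩ {v | v i j ≤ 1}))
      ∩ {v | ∑ j, v i j ≤ 1}) := by
    ext v
    simp only [VP, Set.mem_setOf_eq, Set.mem_iInter, Set.mem_inter_iff]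
  rw [h]
  refine MeasurableSet.iInter fun i => MeasurableSet.inter
    (MeasurableSet.iInter fun j => MeasurableSet.inter ?_ ?_) ?_
  · exact measurableSet_le measurable_const
      ((measurable_pi_apply j).comp (measurable_pi_apply i))
  · exact measurableSet_le ((measurable_pi_apply j).comp (measurable_pi_apply i))
      measurable_const
  · exact measurableSet_le (Finset.measurable_sum _ fun j _ =>
      (measurable_pi_apply j).comp (measurable_pi_apply i)) measurable_const

/-- Uniform bound for the boosts of a menu. -/
noncomputable def Bb (M : Menu m n K) : ℝ :=
  Finset.univ.sup' Finset.univ_nonempty (fun k => |(M k).2|)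

lemma abs_beta_le (M : Menu m n K) (k : Fin (K + 1)) : |(M k).2| ≤ Bb M := by
  unfold Bb; exact Finset.le_sup' (fun k => |(M k).2|) (Finset.mem_univ k)

lemma Bb_nonneg (M : Menu m n K) : 0 ≤ Bb M :=
  (abs_nonneg _).trans (abs_beta_le M 0)

lemma dotp_mem {M : Menu m n K} (hM : IsMenu M) {v : Fin m → Fin n → ℝ}
    (hv : v ∈ VP m n) (i : Fin m) (k : Fin (K + 1)) :
    0 ≤ dotp (v i) ((M k).1 i) ∧ dotp (v i) ((M k).1 i) ≤ 1 := by
  constructor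
  · exact Finset.sum_nonneg fun j _ => mul_nonneg ((hv i).1 j).1 (hM.1 k i j).1
  · calc dotp (v i) ((M k).1 i) ≤ ∑ j, v i j := by
          refine Finset.sum_le_sum fun j _ => ?_
          exact mul_le_of_le_one_right ((hv i).1 j).1 (hM.1 k i j).2
      _ ≤ 1 := (hv i).2

lemma abs_bw_le {M : Menu m n K} (hM : IsMenu M) {v : Fin m → Fin n → ℝ}
    (hv : v ∈ VP m n) (k : Fin (K + 1)) : |bw M v k| ≤ (m : ℝ) + Bb M := by
  have h1 : 0 ≤ ∑ i, dotp (v i) ((M k).1 i) :=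
    Finset.sum_nonneg fun i _ => (dotp_mem hM hv i k).1
  have h2 : ∑ i, dotp (v i) ((M k).1 i) ≤ (m : ℝ) := by
    calc ∑ i, dotp (v i) ((M k).1 i) ≤ ∑ _i : Fin m, (1 : ℝ) :=
          Finset.sum_le_sum fun i _ => (dotp_mem hM hv i k).2
      _ = (m : ℝ) := by simp
  have h3 := abs_beta_le M k
  have h4 := abs_le.1 h3
  rw [abs_le]
  unfold bw
  constructor <;> [linarith; linarith]

lemma abs_bwWo_le {M : Menu m n K} (hM : IsMenu M) {v : Fin m → Fin n → ℝ}
    (hv : v ∈ VP m n) (i : Fin m) (k : Fin (K + 1)) :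
    |bwWo M v i k| ≤ (m : ℝ) + Bb M := by
  have h1 : 0 ≤ ∑ l ∈ Finset.univ.erase i, dotp (v l) ((M k).1 l) :=
    Finset.sum_nonneg fun l _ => (dotp_mem hM hv l k).1
  have h2 : ∑ l ∈ Finset.univ.erase i, dotp (v l) ((M k).1 l) ≤ (m : ℝ) := by
    calc ∑ l ∈ Finset.univ.erase i, dotp (v l) ((M k).1 l)
        ≤ ∑ l, dotp (v l) ((M k).1 l) := by
          refine Finset.sum_le_sum_of_subset_of_nonneg (Finset.subset_univ _) ?_
          exact fun l _ _ => (dotp_mem hM hv l k).1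
      _ ≤ ∑ _l : Fin m, (1 : ℝ) := Finset.sum_le_sum fun l _ => (dotp_mem hM hv l k).2
      _ = (m : ℝ) := by simp
  have h4 := abs_le.1 (abs_beta_le M k)
  rw [abs_le]
  unfold bwWo
  constructor <;> [linarith; linarith]

lemma abs_W_le {M : Menu m n K} (hM : IsMenu M) {v : Fin m → Fin n → ℝ}
    (hv : v ∈ VP m n) : |W M v| ≤ (m : ℝ) + Bb M := by
  rw [abs_le]
  constructor
  · calc -((m : ℝ) + Bb M) ≤ bw M v 0 := (abs_le.1 (abs_bw_le hM hv 0)).1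
      _ ≤ W M v := bw_le_W M v 0
  · exact Finset.sup'_le _ _ fun k _ => (abs_le.1 (abs_bw_le hM hv k)).2

lemma abs_WWo_le {M : Menu m n K} (hM : IsMenu M) {v : Fin m → Fin n → ℝ}
    (hv : v ∈ VP m n) (i : Fin m) : |WWo M v i| ≤ (m : ℝ) + Bb M := by
  rw [abs_le]
  constructor
  · calc -((m : ℝ) + Bb M) ≤ bwWo M v i 0 := (abs_le.1 (abs_bwWo_le hM hv i 0)).1
      _ ≤ WWo M v i := bwWo_le_WWo M v i 0
  · exact Finset.sup'_le _ _ fun k _ => (abs_le.1 (abs_bwWo_le hM hv i k)).2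

lemma abs_minBeta_le (M : Menu m n K) (v : Fin m → Fin n → ℝ) :
    |minBeta M v| ≤ Bb M := by
  obtain ⟨k, -, hk⟩ := exists_minBeta M v
  rw [hk]
  exact abs_beta_le M k

lemma abs_pay_le {M : Menu m n K} (hM : IsMenu M) {v : Fin m → Fin n → ℝ}
    (hv : v ∈ VP m n) :
    |pay M v| ≤ (m : ℝ) * ((m : ℝ) + Bb M) + ((m : ℝ) + 1) * ((m : ℝ) + Bb M) + Bb M := by
  have hm0 : (0 : ℝ) ≤ (m : ℝ) := Nat.cast_nonneg m
  have hb0 := Bb_nonneg M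
  have hA : |∑ i, WWo M v i| ≤ (m : ℝ) * ((m : ℝ) + Bb M) := by
    calc |∑ i, WWo M v i| ≤ ∑ i, |WWo M v i| := Finset.abs_sum_le_sum_abs _ _
      _ ≤ ∑ _i : Fin m, ((m : ℝ) + Bb M) :=
          Finset.sum_le_sum fun i _ => abs_WWo_le hM hv i
      _ = (m : ℝ) * ((m : ℝ) + Bb M) := by simp; ring
  have hB : |((m : ℝ) - 1) * W M v| ≤ ((m : ℝ) + 1) * ((m : ℝ) + Bb M) := by
    rw [abs_mul]
    refine mul_le_mul ?_ (abs_W_le hM hv) (abs_nonneg _) (by linarith)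
    rw [abs_le]; constructor <;> linarith
  have hC := abs_minBeta_le M v
  have h1 : |pay M v| ≤ |∑ i, WWo M v i| + |((m : ℝ) - 1) * W M v| + |minBeta M v| := by
    unfold pay
    rw [sub_eq_add_neg, sub_eq_add_neg]
    calc |(∑ i, WWo M v i) + -(((m : ℝ) - 1) * W M v) + -(minBeta M v)|
        ≤ |(∑ i, WWo M v i) + -(((m : ℝ) - 1) * W M v)| + |-(minBeta M v)| := abs_add_le _ _
      _ ≤ |∑ i, WWo M v i| + |-(((m : ℝ) - 1) * W M v)| + |-(minBeta M v)| := by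
          have := abs_add_le (∑ i, WWo M v i) (-(((m : ℝ) - 1) * W M v))
          linarith
      _ = |∑ i, WWo M v i| + |((m : ℝ) - 1) * W M v| + |minBeta M v| := by
          rw [abs_neg, abs_neg]
  linarith

lemma ae_VP (F : Measure (Fin m → Fin n → ℝ)) [IsProbabilityMeasure F]
    (hFV : F (VP m n) = 1) : ∀ᵐ v ∂F, v ∈ VP m n := by
  rw [ae_iff]
  have h : {v : Fin m → Fin n → ℝ | ¬ v ∈ VP m n} = (VP m n)ᶜ := rfl
  rw [h, measure_compl measurableSet_VP (measure_ne_top F _), hFV, measure_univ, tsub_self]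

lemma integrable_pay (F : Measure (Fin m → Fin n → ℝ)) [IsProbabilityMeasure F]
    (hFV : F (VP m n) = 1) {M : Menu m n K} (hM : IsMenu M) :
    Integrable (pay M) F := by
  refine Integrable.mono' (integrable_const
    ((m : ℝ) * ((m : ℝ) + Bb M) + ((m : ℝ) + 1) * ((m : ℝ) + Bb M) + Bb M))
    (measurable_pay M).aestronglyMeasurable ?_
  filter_upwards [ae_VP F hFV] with v hv
  simpa using abs_pay_le hM hv

lemma ae_goodEvent (F : Measure (Fin m → Fin n → ℝ)) [IsProbabilityMeasure F]
    {M : Menu m n K} {K' : Finset (Fin (K + 1))}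
    (h : (F {v | GoodEvent M K' v}).toReal ≥ 1 - 0 / (m : ℝ)) :
    ∀ᵐ v ∂F, GoodEvent M K' v := by
  have h' : (1 : ℝ) ≤ (F {v | GoodEvent M K' v}).toReal := by
    simpa using h
  have h2 : (1 : ENNReal) ≤ F {v | GoodEvent M K' v} := by
    rw [← ENNReal.ofReal_one, ← ENNReal.ofReal_toReal (measure_ne_top F _)]
    exact ENNReal.ofReal_le_ofReal h'
  have h1 : F {v | GoodEvent M K' v} = 1 := le_antisymm prob_le_one h2
  rw [ae_iff]
  have hc : {v : Fin m → Fin n → ℝ | ¬ GoodEvent M K' v} = {v | GoodEvent M K' v}ᶜ := rfl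
  rw [hc, measure_compl (measurableSet_goodEvent M K') (measure_ne_top F _), h1,
    measure_univ, tsub_self]

end Aux2


section Aux3

variable {m n K : ℕ}

lemma dotp_comb (lam : ℝ) (v x x' : Fin n → ℝ) :
    dotp v (fun j => lam * x j + (1 - lam) * x' j)
      = lam * dotp v x + (1 - lam) * dotp v x' := by
  unfold dotp
  rw [Finset.mul_sum, Finset.mul_sum, ← Finset.sum_add_distrib]
  exact Finset.sum_congr rfl fun j _ => by ring

lemma bw_comb (lam : ℝ) (A B : Menu m n K) (v : Fin m → Fin n → ℝ) (k : Fin (K + 1)) :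
    bw (comb lam A B) v k = lam * bw A v k + (1 - lam) * bw B v k := by
  unfold bw comb
  simp only [dotp_comb]
  rw [Finset.sum_add_distrib, ← Finset.mul_sum, ← Finset.mul_sum]
  ring

lemma bwWo_comb (lam : ℝ) (A B : Menu m n K) (v : Fin m → Fin n → ℝ) (i : Fin m)
    (k : Fin (K + 1)) :
    bwWo (comb lam A B) v i k = lam * bwWo A v i k + (1 - lam) * bwWo B v i k := by
  unfold bwWo comb
  simp only [dotp_comb]
  rw [Finset.sum_add_distrib, ← Finset.mul_sum, ← Finset.mul_sum]
  ring

/-- Key pointwise lemma: if some single option simultaneously realizes the maximal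
boosted welfare (with minimal boost) for `A` and `B`, and similarly for each `v₋ᵢ`,
then the payment of a convex combination is the convex combination of payments. -/
lemma pay_comb (A B : Menu m n K) (v : Fin m → Fin n → ℝ) {lam : ℝ}
    (h0 : 0 ≤ lam) (h1 : lam ≤ 1)
    (hmax : ∃ k, bw A v k = W A v ∧ bw B v k = W B v ∧
      (A k).2 = minBeta A v ∧ (B k).2 = minBeta B v)
    (hwo : ∀ i, ∃ k, bwWo A v i k = WWo A v i ∧ bwWo B v i k = WWo B v i) :
    pay (comb lam A B) v = lam * pay A v + (1 - lam) * pay B v := by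
  have h1' : (0 : ℝ) ≤ 1 - lam := by linarith
  obtain ⟨k₀, hA0, hB0, hbA, hbB⟩ := hmax
  have hW : W (comb lam A B) v = lam * W A v + (1 - lam) * W B v := by
    apply le_antisymm
    · apply Finset.sup'_le
      intro k _
      rw [bw_comb]
      exact add_le_add (mul_le_mul_of_nonneg_left (bw_le_W A v k) h0)
        (mul_le_mul_of_nonneg_left (bw_le_W B v k) h1')
    · calc lam * W A v + (1 - lam) * W B v = bw (comb lam A B) v k₀ := by
            rw [bw_comb, hA0, hB0]
        _ ≤ W (comb lam A B) v := bw_le_W _ v k₀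
  have hWWo : ∀ i, WWo (comb lam A B) v i = lam * WWo A v i + (1 - lam) * WWo B v i := by
    intro i
    obtain ⟨k, hkA, hkB⟩ := hwo i
    apply le_antisymm
    · apply Finset.sup'_le
      intro k' _
      rw [bwWo_comb]
      exact add_le_add (mul_le_mul_of_nonneg_left (bwWo_le_WWo A v i k') h0)
        (mul_le_mul_of_nonneg_left (bwWo_le_WWo B v i k') h1')
    · calc lam * WWo A v i + (1 - lam) * WWo B v i = bwWo (comb lam A B) v i k := by
            rw [bwWo_comb, hkA, hkB]
        _ ≤ WWo (comb lam A B) v i := bwWo_le_WWo _ v i k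
  have hbcomb : ∀ k, (comb lam A B k).2 = lam * (A k).2 + (1 - lam) * (B k).2 :=
    fun k => rfl
  have hbeta : minBeta (comb lam A B) v = lam * minBeta A v + (1 - lam) * minBeta B v := by
    apply le_antisymm
    · apply csInf_le (betaSet_finite _ v).bddBelow
      refine ⟨k₀, ?_, ?_⟩
      · rw [bw_comb, hA0, hB0, hW]
      · rw [hbcomb, ← hbA, ← hbB]
    · apply le_csInf (betaSet_nonempty _ v)
      rintro b ⟨k, hk, rfl⟩
      rw [bw_comb, hW] at hk
      have hle1 : lam * bw A v k ≤ lam * W A v :=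
        mul_le_mul_of_nonneg_left (bw_le_W A v k) h0
      have hle2 : (1 - lam) * bw B v k ≤ (1 - lam) * W B v :=
        mul_le_mul_of_nonneg_left (bw_le_W B v k) h1'
      have heq1 : lam * bw A v k = lam * W A v := by linarith
      have heq2 : (1 - lam) * bw B v k = (1 - lam) * W B v := by linarith
      have t1 : lam * minBeta A v ≤ lam * (A k).2 := by
        rcases eq_or_lt_of_le h0 with h | h
        · rw [← h]; simp
        · have hbwk : bw A v k = W A v := mul_left_cancel₀ (ne_of_gt h) heq1
          exact mul_le_mul_of_nonneg_left (minBeta_le hbwk) h0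
      have t2 : (1 - lam) * minBeta B v ≤ (1 - lam) * (B k).2 := by
        rcases eq_or_lt_of_le h1' with h | h
        · rw [← h]; simp
        · have hbwk : bw B v k = W B v := mul_left_cancel₀ (ne_of_gt h) heq2
          exact mul_le_mul_of_nonneg_left (minBeta_le hbwk) h1'
      rw [hbcomb]
      exact add_le_add t1 t2
  unfold pay
  rw [hW, hbeta, Finset.sum_congr rfl (fun i _ => hWWo i), Finset.sum_add_distrib,
    ← Finset.mul_sum, ← Finset.mul_sum]
  ring

/-- Replacing options by reindexed options (covering the good subset `K'`) preserves
`W`, `WWo` and `minBeta` on the good event. -/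
lemma comp_facts (M : Menu m n K) (K' : Finset (Fin (K + 1)))
    (ψ : Fin (K + 1) → Fin (K + 1)) (v : Fin m → Fin n → ℝ)
    (hg : GoodEvent M K' v) (hsurj : ∀ j ∈ K', ∃ k, ψ k = j) :
    W (fun k => M (ψ k)) v = W M v ∧
    (∀ i, WWo (fun k => M (ψ k)) v i = WWo M v i) ∧
    minBeta (fun k => M (ψ k)) v = minBeta M v := by
  obtain ⟨⟨k₁, hk₁K, hk₁, hb₁⟩, hwo⟩ := hg
  have hbw : ∀ k, bw (fun k => M (ψ k)) v k = bw M v (ψ k) := fun k => rfl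
  have hbwWo : ∀ i k, bwWo (fun k => M (ψ k)) v i k = bwWo M v i (ψ k) := fun i k => rfl
  have hW : W (fun k => M (ψ k)) v = W M v := by
    apply le_antisymm
    · apply Finset.sup'_le
      intro k _
      rw [hbw]
      exact bw_le_W M v (ψ k)
    · obtain ⟨k, hk⟩ := hsurj k₁ hk₁K
      calc W M v = bw (fun k => M (ψ k)) v k := by rw [hbw, hk, hk₁]
        _ ≤ W (fun k => M (ψ k)) v := bw_le_W _ v k
  refine ⟨hW, fun i => ?_, ?_⟩
  · obtain ⟨k₂, hk₂K, hk₂⟩ := hwo i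
    apply le_antisymm
    · apply Finset.sup'_le
      intro k _
      rw [hbwWo]
      exact bwWo_le_WWo M v i (ψ k)
    · obtain ⟨k, hk⟩ := hsurj k₂ hk₂K
      calc WWo M v i = bwWo (fun k => M (ψ k)) v i k := by rw [hbwWo, hk, hk₂]
        _ ≤ WWo (fun k => M (ψ k)) v i := bwWo_le_WWo _ v i k
  · apply le_antisymm
    · obtain ⟨k, hk⟩ := hsurj k₁ hk₁K
      apply csInf_le (betaSet_finite _ v).bddBelow
      refine ⟨k, ?_, ?_⟩
      · rw [hbw, hk, hk₁, hW]
      · show minBeta M v = (M (ψ k)).2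
        rw [hk]
        exact hb₁.symm
    · apply le_csInf (betaSet_nonempty _ v)
      rintro b ⟨k, hk, rfl⟩
      rw [hbw, hW] at hk
      exact minBeta_le hk

/-- `pay` is preserved by reindexing on the good event. -/
lemma pay_comp (M : Menu m n K) (K' : Finset (Fin (K + 1)))
    (ψ : Fin (K + 1) → Fin (K + 1)) (v : Fin m → Fin n → ℝ)
    (hg : GoodEvent M K' v) (hsurj : ∀ j ∈ K', ∃ k, ψ k = j) :
    pay (fun k => M (ψ k)) v = pay M v := by
  obtain ⟨hW, hWWo, hbeta⟩ := comp_facts M K' ψ v hg hsurj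
  unfold pay
  rw [hW, hbeta, Finset.sum_congr rfl fun i _ => hWWo i]

end Aux3


section Psi

/-- Construction of the two reindexing maps: `ψ₁` fixes `A` pointwise, `ψ₂` fixes `B`
pointwise, and jointly they cover every pair in `A × B`. -/
lemma exists_psi {N : ℕ} (A B : Finset (Fin (N + 1))) (h0A : (0 : Fin (N + 1)) ∈ A)
    (h0B : (0 : Fin (N + 1)) ∈ B) (hcard : A.card * B.card ≤ N + 1) :
    ∃ ψ₁ ψ₂ : Fin (N + 1) → Fin (N + 1),
      (∀ a ∈ A, ψ₁ a = a) ∧ (∀ b ∈ B, ψ₂ b = b) ∧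
      (∀ a ∈ A, ∀ b ∈ B, ∃ k, ψ₁ k = a ∧ ψ₂ k = b) := by
  classical
  set p : Fin (N + 1) → Fin (N + 1) × Fin (N + 1) :=
    fun k => (if k ∈ A then k else 0, if k ∈ B then k else 0) with hp
  set U : Finset (Fin (N + 1)) := A ∪ B with hU
  have hpmem : ∀ k, p k ∈ A ×ˢ B := by
    intro k
    refine Finset.mem_product.2 ⟨?_, ?_⟩
    · by_cases h : k ∈ A <;> simp [hp, h, h0A]
    · by_cases h : k ∈ B <;> simp [hp, h, h0B]
  have hpinj : Set.InjOn p (U : Set (Fin (N + 1))) := by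
    intro x hx y hy hxy
    simp only [hp, Prod.mk.injEq] at hxy
    by_cases hxA : x ∈ A <;> by_cases hyA : y ∈ A
    · rw [if_pos hxA, if_pos hyA] at hxy
      exact hxy.1
    · exfalso
      have hyB : y ∈ B := by
        rcases Finset.mem_union.1 hy with h | h
        · exact absurd h hyA
        · exact h
      rw [if_pos hxA, if_neg hyA] at hxy
      have hx0 : x = 0 := hxy.1
      rw [hx0, if_pos h0B, if_pos hyB] at hxy
      exact hyA (hxy.2 ▸ h0A)
    · exfalso
      have hxB : x ∈ B := by
        rcases Finset.mem_union.1 hx with h | h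
        · exact absurd h hxA
        · exact h
      rw [if_neg hxA, if_pos hyA] at hxy
      have hy0 : y = 0 := hxy.1.symm
      rw [hy0, if_pos h0B, if_pos hxB] at hxy
      exact hxA (hxy.2.symm ▸ h0A)
    · have hxB : x ∈ B := by
        rcases Finset.mem_union.1 hx with h | h
        · exact absurd h hxA
        · exact h
      have hyB : y ∈ B := by
        rcases Finset.mem_union.1 hy with h | h
        · exact absurd h hyA
        · exact h
      rw [if_pos hxB, if_pos hyB] at hxy
      exact hxy.2
  set R : Finset (Fin (N + 1) × Fin (N + 1)) := (A ×ˢ B) \ U.image p with hR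
  set I : Finset (Fin (N + 1)) := Uᶜ with hI
  have himage : (U.image p).card = U.card := Finset.card_image_of_injOn hpinj
  have himsub : U.image p ⊆ A ×ˢ B := by
    intro x hx
    obtain ⟨k, -, hk⟩ := Finset.mem_image.1 hx
    exact hk ▸ hpmem k
  have hRcard : R.card ≤ I.card := by
    have h1 : R.card = A.card * B.card - U.card := by
      rw [hR, Finset.card_sdiff_of_subset himsub, himage, Finset.card_product]
    have h2 : I.card = (N + 1) - U.card := by
      rw [hI, Finset.card_compl, Fintype.card_fin]
    rw [h1, h2]
    exact Nat.sub_le_sub_right hcard _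
  have hembed : Nonempty ({x // x ∈ R} ↪ {x // x ∈ I}) := by
    apply Function.Embedding.nonempty_of_card_le
    rwa [Fintype.card_coe, Fintype.card_coe]
  obtain ⟨q⟩ := hembed
  let pr : Fin (N + 1) → Fin (N + 1) × Fin (N + 1) := fun k =>
    if hUk : k ∈ U then p k
    else if h : ∃ r : {x // x ∈ R}, (q r : {x // x ∈ I}).1 = k then (Exists.choose h).1
    else (0, 0)
  refine ⟨fun k => (pr k).1, fun k => (pr k).2, fun a ha => ?_, fun b hb => ?_,
    fun a ha b hb => ?_⟩
  · have hUa : a ∈ U := Finset.mem_union_left _ ha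
    show (pr a).1 = a
    simp only [pr, dif_pos hUa, hp, if_pos ha]
  · have hUb : b ∈ U := Finset.mem_union_right _ hb
    show (pr b).2 = b
    simp only [pr, dif_pos hUb, hp, if_pos hb]
  · by_cases hmem : (a, b) ∈ U.image p
    · obtain ⟨k, hkU, hk⟩ := Finset.mem_image.1 hmem
      have hpk : pr k = (a, b) := by
        simp only [pr, dif_pos hkU]
        exact hk
      exact ⟨k, by show (pr k).1 = a; rw [hpk], by show (pr k).2 = b; rw [hpk]⟩
    · have hmemR : (a, b) ∈ R :=
        Finset.mem_sdiff.2 ⟨Finset.mem_product.2 ⟨ha, hb⟩, hmem⟩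
      set r : {x // x ∈ R} := ⟨(a, b), hmemR⟩ with hr
      set k : Fin (N + 1) := (q r : {x // x ∈ I}).1 with hk
      have hkI : k ∈ I := (q r).2
      have hkU : k ∉ U := by
        rw [hI] at hkI
        exact Finset.mem_compl.1 hkI
      have hex : ∃ r' : {x // x ∈ R}, (q r' : {x // x ∈ I}).1 = k := ⟨r, rfl⟩
      have hchoose : hex.choose = r := by
        apply q.injective
        apply Subtype.ext
        exact hex.choose_spec
      have hpk : pr k = (a, b) := by
        simp only [pr, dif_neg hkU, dif_pos hex, hchoose]
        rfl
      exact ⟨k, by show (pr k).1 = a; rw [hpk], by show (pr k).2 = b; rw [hpk]⟩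

end Psi

/-- If two AMA menus `M₁`, `M₂` (indexed by `{0,…,K}`) are
`0`-reducible, then they are `0`-mode-connected via a piecewise linear path with three
linear pieces. -/
theorem statement11 {m n K : ℕ} (hm : 0 < m) (F : Measure (Fin m → Fin n → ℝ))
    [IsProbabilityMeasure F] (hFV : F (VP m n) = 1)
    (M₁ M₂ : Menu m n K) (hM₁ : IsMenu M₁) (hM₂ : IsMenu M₂)
    (hr₁ : Reducible F M₁ 0) (hr₂ : Reducible F M₂ 0) :
    PLConnected F M₁ M₂ 0 3 := by
  classical
  obtain ⟨K₁, h0₁, hc₁, hp₁⟩ := hr₁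
  obtain ⟨K₂, h0₂, hc₂, hp₂⟩ := hr₂
  have hcard : K₁.card * K₂.card ≤ K + 1 := by
    have h := mul_le_mul hc₁ hc₂ (Nat.cast_nonneg _) (Real.sqrt_nonneg _)
    rw [Real.mul_self_sqrt (by positivity)] at h
    exact_mod_cast h
  obtain ⟨ψ₁, ψ₂, hfix₁, hfix₂, hjoint⟩ := exists_psi K₁ K₂ h0₁ h0₂ hcard
  have hsurj₁ : ∀ j ∈ K₁, ∃ k, ψ₁ k = j := fun j hj => ⟨j, hfix₁ j hj⟩
  have hsurj₂ : ∀ j ∈ K₂, ∃ k, ψ₂ k = j := fun j hj => ⟨j, hfix₂ j hj⟩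
  have hMaMenu : IsMenu (fun k => M₁ (ψ₁ k)) :=
    ⟨fun k i j => hM₁.1 (ψ₁ k) i j, fun k j => hM₁.2.1 (ψ₁ k) j, by
      show M₁ (ψ₁ 0) = 0
      rw [hfix₁ 0 h0₁]
      exact hM₁.2.2⟩
  have hMbMenu : IsMenu (fun k => M₂ (ψ₂ k)) :=
    ⟨fun k i j => hM₂.1 (ψ₂ k) i j, fun k j => hM₂.2.1 (ψ₂ k) j, by
      show M₂ (ψ₂ 0) = 0
      rw [hfix₂ 0 h0₂]
      exact hM₂.2.2⟩
  have hae₁ : ∀ᵐ v ∂F, GoodEvent M₁ K₁ v := ae_goodEvent F hp₁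
  have hae₂ : ∀ᵐ v ∂F, GoodEvent M₂ K₂ v := ae_goodEvent F hp₂
  have hint₁ : Integrable (pay M₁) F := integrable_pay F hFV hM₁
  have hint₂ : Integrable (pay M₂) F := integrable_pay F hFV hM₂
  -- Segment 1 : from `M₁` to `M₁ ∘ ψ₁`.
  have hseg1 : ∀ lam : ℝ, 0 ≤ lam → lam ≤ 1 →
      Rev F (comb lam M₁ (fun k => M₁ (ψ₁ k))) = Rev F M₁ := by
    intro lam hl0 hl1
    unfold Rev
    apply integral_congr_ae
    filter_upwards [hae₁] with v hg₁
    have hpayMa : pay (fun k => M₁ (ψ₁ k)) v = pay M₁ v :=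
      pay_comp M₁ K₁ ψ₁ v hg₁ hsurj₁
    obtain ⟨hWa, hWWoa, hba⟩ := comp_facts M₁ K₁ ψ₁ v hg₁ hsurj₁
    obtain ⟨⟨k₁, hk₁K, hk₁, hb₁⟩, hwo₁⟩ := hg₁
    have h := pay_comb M₁ (fun k => M₁ (ψ₁ k)) v hl0 hl1 ?_ ?_
    · rw [h, hpayMa]; ring
    · refine ⟨k₁, hk₁, ?_, hb₁, ?_⟩
      · show bw M₁ v (ψ₁ k₁) = W (fun k => M₁ (ψ₁ k)) v
        rw [hfix₁ k₁ hk₁K, hk₁, hWa]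
      · show (M₁ (ψ₁ k₁)).2 = minBeta (fun k => M₁ (ψ₁ k)) v
        rw [hfix₁ k₁ hk₁K, hba]
        exact hb₁
    · intro i
      obtain ⟨k, hkK, hk⟩ := hwo₁ i
      refine ⟨k, hk, ?_⟩
      show bwWo M₁ v i (ψ₁ k) = WWo (fun k => M₁ (ψ₁ k)) v i
      rw [hfix₁ k hkK, hWWoa i, hk]
  -- Segment 3 : from `M₂ ∘ ψ₂` to `M₂`.
  have hseg3 : ∀ lam : ℝ, 0 ≤ lam → lam ≤ 1 →
      Rev F (comb lam (fun k => M₂ (ψ₂ k)) M₂) = Rev F M₂ := by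
    intro lam hl0 hl1
    unfold Rev
    apply integral_congr_ae
    filter_upwards [hae₂] with v hg₂
    have hpayMb : pay (fun k => M₂ (ψ₂ k)) v = pay M₂ v :=
      pay_comp M₂ K₂ ψ₂ v hg₂ hsurj₂
    obtain ⟨hWb, hWWob, hbb⟩ := comp_facts M₂ K₂ ψ₂ v hg₂ hsurj₂
    obtain ⟨⟨k₂, hk₂K, hk₂, hb₂⟩, hwo₂⟩ := hg₂
    have h := pay_comb (fun k => M₂ (ψ₂ k)) M₂ v hl0 hl1 ?_ ?_
    · rw [h, hpayMb]; ring
    · refine ⟨k₂, ?_, hk₂, ?_, hb₂⟩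
      · show bw M₂ v (ψ₂ k₂) = W (fun k => M₂ (ψ₂ k)) v
        rw [hfix₂ k₂ hk₂K, hk₂, hWb]
      · show (M₂ (ψ₂ k₂)).2 = minBeta (fun k => M₂ (ψ₂ k)) v
        rw [hfix₂ k₂ hk₂K, hbb]
        exact hb₂
    · intro i
      obtain ⟨k, hkK, hk⟩ := hwo₂ i
      refine ⟨k, ?_, hk⟩
      show bwWo M₂ v i (ψ₂ k) = WWo (fun k => M₂ (ψ₂ k)) v i
      rw [hfix₂ k hkK, hWWob i, hk]
  -- Segment 2 : from `M₁ ∘ ψ₁` to `M₂ ∘ ψ₂`.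
  have hseg2 : ∀ lam : ℝ, 0 ≤ lam → lam ≤ 1 →
      Rev F (comb lam (fun k => M₁ (ψ₁ k)) (fun k => M₂ (ψ₂ k)))
        = lam * Rev F M₁ + (1 - lam) * Rev F M₂ := by
    intro lam hl0 hl1
    unfold Rev
    rw [show ∫ v, pay (comb lam (fun k => M₁ (ψ₁ k)) (fun k => M₂ (ψ₂ k))) v ∂F
        = ∫ v, (lam * pay M₁ v + (1 - lam) * pay M₂ v) ∂F from ?_,
      integral_add (hint₁.const_mul lam) (hint₂.const_mul (1 - lam)),
      integral_const_mul, integral_const_mul]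
    apply integral_congr_ae
    filter_upwards [hae₁, hae₂] with v hg₁ hg₂
    have hpayMa : pay (fun k => M₁ (ψ₁ k)) v = pay M₁ v :=
      pay_comp M₁ K₁ ψ₁ v hg₁ hsurj₁
    have hpayMb : pay (fun k => M₂ (ψ₂ k)) v = pay M₂ v :=
      pay_comp M₂ K₂ ψ₂ v hg₂ hsurj₂
    obtain ⟨hWa, hWWoa, hba⟩ := comp_facts M₁ K₁ ψ₁ v hg₁ hsurj₁
    obtain ⟨hWb, hWWob, hbb⟩ := comp_facts M₂ K₂ ψ₂ v hg₂ hsurj₂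
    obtain ⟨⟨k₁, hk₁K, hk₁, hb₁⟩, hwo₁⟩ := hg₁
    obtain ⟨⟨k₂, hk₂K, hk₂, hb₂⟩, hwo₂⟩ := hg₂
    have h := pay_comb (fun k => M₁ (ψ₁ k)) (fun k => M₂ (ψ₂ k)) v hl0 hl1 ?_ ?_
    · rw [h, hpayMa, hpayMb]
    · obtain ⟨k, hkr₁, hkr₂⟩ := hjoint k₁ hk₁K k₂ hk₂K
      refine ⟨k, ?_, ?_, ?_, ?_⟩
      · show bw M₁ v (ψ₁ k) = W (fun k => M₁ (ψ₁ k)) v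
        rw [hkr₁, hk₁, hWa]
      · show bw M₂ v (ψ₂ k) = W (fun k => M₂ (ψ₂ k)) v
        rw [hkr₂, hk₂, hWb]
      · show (M₁ (ψ₁ k)).2 = minBeta (fun k => M₁ (ψ₁ k)) v
        rw [hkr₁, hba]
        exact hb₁
      · show (M₂ (ψ₂ k)).2 = minBeta (fun k => M₂ (ψ₂ k)) v
        rw [hkr₂, hbb]
        exact hb₂
    · intro i
      obtain ⟨ka, hkaK, hka⟩ := hwo₁ i
      obtain ⟨kb, hkbK, hkb⟩ := hwo₂ i
      obtain ⟨k, hkr₁, hkr₂⟩ := hjoint ka hkaK kb hkbK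
      refine ⟨k, ?_, ?_⟩
      · show bwWo M₁ v i (ψ₁ k) = WWo (fun k => M₁ (ψ₁ k)) v i
        rw [hkr₁, hWWoa i, hka]
      · show bwWo M₂ v i (ψ₂ k) = WWo (fun k => M₂ (ψ₂ k)) v i
        rw [hkr₂, hWWob i, hkb]
  -- Assemble the path.
  refine ⟨![M₁, (fun k => M₁ (ψ₁ k)), (fun k => M₂ (ψ₂ k)), M₂], rfl, rfl, ?_, ?_⟩
  · intro i
    fin_cases i
    · exact hM₁
    · exact hMaMenu
    · exact hMbMenu
    · exact hM₂
  · intro i lam hlam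
    have h1 : min (Rev F M₁) (Rev F M₂) ≤ Rev F M₁ := min_le_left _ _
    have h2 : min (Rev F M₁) (Rev F M₂) ≤ Rev F M₂ := min_le_right _ _
    fin_cases i
    · show Rev F (comb lam M₁ (fun k => M₁ (ψ₁ k))) ≥ min (Rev F M₁) (Rev F M₂) - 0
      rw [hseg1 lam hlam.1 hlam.2, sub_zero]
      exact h1
    · show Rev F (comb lam (fun k => M₁ (ψ₁ k)) (fun k => M₂ (ψ₂ k)))
          ≥ min (Rev F M₁) (Rev F M₂) - 0
      rw [hseg2 lam hlam.1 hlam.2, sub_zero]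
      have e1 : lam * min (Rev F M₁) (Rev F M₂) ≤ lam * Rev F M₁ :=
        mul_le_mul_of_nonneg_left h1 hlam.1
      have e2 : (1 - lam) * min (Rev F M₁) (Rev F M₂) ≤ (1 - lam) * Rev F M₂ :=
        mul_le_mul_of_nonneg_left h2 (by linarith [hlam.2])
      have e3 : lam * min (Rev F M₁) (Rev F M₂) + (1 - lam) * min (Rev F M₁) (Rev F M₂)
          = min (Rev F M₁) (Rev F M₂) := by ring
      linarith
    · show Rev F (comb lam (fun k => M₂ (ψ₂ k)) M₂) ≥ min (Rev F M₁) (Rev F M₂) - 0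
      rw [hseg3 lam hlam.1 hlam.2, sub_zero]
      exact h2

end AMA
end

section
/- Let L ≥ 1 be an integer, let a_1 ≥ a_2 ≥ ... ≥ a_L be real numbers, and let Y > 0. Then 0 ≤ a_1 − ∑_{k=1}^{L} a_k · e^{Y a_k} / ( ∑_{k'=1}^{L} e^{Y a_{k'}} ) ≤ L/(e·Y), where e is Euler's number. -/
open Finset

lemma key_xexp (Y x : ℝ) (hY : 0 < Y) (hx : 0 ≤ x) :
    x * Real.exp (-(Y * x)) ≤ 1 / (Real.exp 1 * Y) := by
  have ht : Y * x ≤ Real.exp (Y * x - 1) + 0 := by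
    have := Real.add_one_le_exp (Y * x - 1)
    linarith
  have hE : (0:ℝ) < Real.exp (Y * x) := Real.exp_pos _
  have h1 : (0:ℝ) < Real.exp 1 := Real.exp_pos _
  rw [Real.exp_neg]
  rw [Real.exp_sub] at ht
  rw [le_div_iff₀ (by positivity)]
  have : Y * x * Real.exp 1 ≤ Real.exp (Y * x) := by
    rw [← le_div_iff₀ h1]
    linarith
  calc x * (Real.exp (Y*x))⁻¹ * (Real.exp 1 * Y)
      = (Y * x * Real.exp 1) * (Real.exp (Y*x))⁻¹ := by ring
    _ ≤ Real.exp (Y*x) * (Real.exp (Y*x))⁻¹ := by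
        apply mul_le_mul_of_nonneg_right this (by positivity)
    _ = 1 := mul_inv_cancel₀ (ne_of_gt hE)

/-- For reals `a 0 ≥ a 1 ≥ … ≥ a (L-1)` (with `L ≥ 1`) and `Y > 0`,
the gap between the maximum `a 0` and the softmax average with inverse temperature `Y`
lies in `[0, L / (e · Y)]`. -/
theorem statement18 (L : ℕ) (hL : 1 ≤ L) (a : Fin L → ℝ) (ha : Antitone a)
    (Y : ℝ) (hY : 0 < Y) :
    0 ≤ a ⟨0, hL⟩ - (∑ k, a k * Real.exp (Y * a k)) / (∑ k, Real.exp (Y * a k)) ∧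
    a ⟨0, hL⟩ - (∑ k, a k * Real.exp (Y * a k)) / (∑ k, Real.exp (Y * a k)) ≤
      (L : ℝ) / (Real.exp 1 * Y) := by
  set z : Fin L := ⟨0, hL⟩ with hz
  set S : ℝ := ∑ k, Real.exp (Y * a k) with hS
  have hSpos : 0 < S := Finset.sum_pos (fun i _ => Real.exp_pos _) ⟨z, mem_univ z⟩
  have hmax : ∀ k : Fin L, a k ≤ a z := fun k => ha (by simp [hz, Fin.le_def])
  have hrw : a z - (∑ k, a k * Real.exp (Y * a k)) / S
      = (∑ k, (a z - a k) * Real.exp (Y * a k)) / S := by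
    rw [eq_div_iff (ne_of_gt hSpos), sub_mul, div_mul_cancel₀ _ (ne_of_gt hSpos), hS,
      Finset.mul_sum, ← Finset.sum_sub_distrib]
    congr 1; ext k; ring
  rw [hrw]
  constructor
  · apply div_nonneg _ hSpos.le
    exact Finset.sum_nonneg fun k _ =>
      mul_nonneg (sub_nonneg.2 (hmax k)) (Real.exp_pos _).le
  · have hterm : ∀ k : Fin L, (a z - a k) * Real.exp (Y * a k)
        ≤ Real.exp (Y * a z) * (1 / (Real.exp 1 * Y)) := by
      intro k
      have hx : 0 ≤ a z - a k := sub_nonneg.2 (hmax k)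
      have := key_xexp Y (a z - a k) hY hx
      have hrw2 : Real.exp (Y * a k) = Real.exp (Y * a z) * Real.exp (-(Y * (a z - a k))) := by
        rw [← Real.exp_add]; ring_nf
      rw [hrw2]
      calc (a z - a k) * (Real.exp (Y * a z) * Real.exp (-(Y * (a z - a k))))
          = Real.exp (Y * a z) * ((a z - a k) * Real.exp (-(Y * (a z - a k)))) := by ring
        _ ≤ Real.exp (Y * a z) * (1 / (Real.exp 1 * Y)) := by
            apply mul_le_mul_of_nonneg_left this (Real.exp_pos _).le
    have hnum : (∑ k, (a z - a k) * Real.exp (Y * a k))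
        ≤ L * (Real.exp (Y * a z) * (1 / (Real.exp 1 * Y))) := by
      calc (∑ k, (a z - a k) * Real.exp (Y * a k))
          ≤ ∑ _k : Fin L, Real.exp (Y * a z) * (1 / (Real.exp 1 * Y)) :=
            Finset.sum_le_sum fun k _ => hterm k
        _ = L * (Real.exp (Y * a z) * (1 / (Real.exp 1 * Y))) := by
            rw [Finset.sum_const, card_univ, Fintype.card_fin, nsmul_eq_mul]
    have hSle : Real.exp (Y * a z) ≤ S := by
      rw [hS]
      exact Finset.single_le_sum (f := fun i => Real.exp (Y * a i)) (fun i _ => (Real.exp_pos _).le) (mem_univ z)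
    rw [div_le_iff₀ hSpos]
    calc (∑ k, (a z - a k) * Real.exp (Y * a k))
        ≤ L * (Real.exp (Y * a z) * (1 / (Real.exp 1 * Y))) := hnum
      _ = (L / (Real.exp 1 * Y)) * Real.exp (Y * a z) := by ring
      _ ≤ (L / (Real.exp 1 * Y)) * S := by
          apply mul_le_mul_of_nonneg_left hSle (by positivity)
end
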